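/- Let X and Y be Hilbert spaces, a : X × X → ℝ a symmetric, continuous, X-elliptic bilinear form, b : X × Y → ℝ a continuous bilinear form satisfying the inf-sup condition (there exists α > 0 with inf over nonzero μ ∈ Y of sup over nonzero v ∈ X of b(v,μ)/(‖v‖·‖μ‖) ≥ α), Λ ⊆ Y a closed convex set containing 0, and f ∈ X. Then there exists a unique pair (u, λ) ∈ X × Λ such that a(u,v) + b(v,λ) = ⟨f,v⟩ for all v ∈ X and b(u, μ − λ) ≤ 0 for all μ ∈ Λ. -/

import Mathlib

open scoped RealInnerProductSpace

set_option maxHeartbeats 1000000 in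
/-- Lions–Stampacchia via Banach fixed point (contraction with projection). -/
theorem my_stampacchia {F : Type*} [NormedAddCommGroup F] [InnerProductSpace ℝ F]
    [CompleteSpace F] (Q : F →L[ℝ] F) (c : ℝ) (hc : 0 < c)
    (hQ : ∀ z, c * ‖z‖ ^ 2 ≤ ⟪Q z, z⟫) (g : F)
    (K : Set F) (hKc : IsClosed K) (hKv : Convex ℝ K) (hK0 : (0 : F) ∈ K) :
    ∃ l ∈ K, ∀ μ ∈ K, 0 ≤ ⟪Q l - g, μ - l⟫ := by
  have hproj : ∀ x : F, ∃ p, p ∈ K ∧ ∀ w ∈ K, ⟪x - p, w - p⟫ ≤ 0 := by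
    intro x
    obtain ⟨p, hpK, hp⟩ :=
      exists_norm_eq_iInf_of_complete_convex ⟨0, hK0⟩ hKc.isComplete hKv x
    exact ⟨p, hpK, (norm_eq_iInf_iff_real_inner_le_zero hKv hpK).mp hp⟩
  choose P hPK hP using hproj
  have Plip : ∀ x y, ‖P x - P y‖ ≤ ‖x - y‖ := by
    intro x y
    have h1 := hP x (P y) (hPK y)
    have h2 := hP y (P x) (hPK x)
    have key : ‖P x - P y‖ ^ 2 ≤ ⟪x - y, P x - P y⟫ := by
      have e : ⟪x - y, P x - P y⟫ - ‖P x - P y‖ ^ 2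
          = (- ⟪x - P x, P y - P x⟫) - ⟪y - P y, P x - P y⟫ := by
        simp only [← real_inner_self_eq_norm_sq, inner_sub_left, inner_sub_right,
          real_inner_comm]
        ring
      nlinarith [h1, h2]
    have hn : ⟪x - y, P x - P y⟫ ≤ ‖x - y‖ * ‖P x - P y‖ := real_inner_le_norm _ _
    rcases eq_or_lt_of_le (norm_nonneg (P x - P y)) with h0 | h0
    · rw [← h0]; exact norm_nonneg _
    · nlinarith
  obtain ⟨M, hMQ, hMpos⟩ : ∃ M : ℝ, ‖Q‖ ≤ M ∧ 0 < M :=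
    ⟨‖Q‖ + 1, by linarith [norm_nonneg Q], by positivity⟩
  set ρ : ℝ := c / M ^ 2 with hρ
  have hρpos : 0 < ρ := by positivity
  set T : F → F := fun x => P (x - ρ • (Q x - g)) with hT
  set k2 : ℝ := max 0 (1 - c ^ 2 / M ^ 2) with hk2
  have hk2nonneg : 0 ≤ k2 := le_max_left _ _
  have hk2lt : k2 < 1 := by
    apply max_lt one_pos
    have : 0 < c ^ 2 / M ^ 2 := by positivity
    linarith
  set k : ℝ := Real.sqrt k2 with hk
  have hknonneg : 0 ≤ k := Real.sqrt_nonneg _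
  have hklt : k < 1 := by
    rw [hk, show (1 : ℝ) = Real.sqrt 1 by simp]
    exact Real.sqrt_lt_sqrt hk2nonneg (by simpa using hk2lt)
  have Tlip : ∀ x y, ‖T x - T y‖ ≤ k * ‖x - y‖ := by
    intro x y
    set z : F := x - y with hz
    have e1 : (x - ρ • (Q x - g)) - (y - ρ • (Q y - g)) = z - ρ • Q z := by
      simp only [hz, map_sub, smul_sub]
      abel
    have hQz : ‖Q z‖ ≤ M * ‖z‖ := by
      have h := Q.le_opNorm z
      nlinarith [norm_nonneg z, hMQ]
    have hsq : ‖z - ρ • Q z‖ ^ 2 ≤ k2 * ‖z‖ ^ 2 := by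
      have expand : ‖z - ρ • Q z‖ ^ 2
          = ‖z‖ ^ 2 - 2 * (ρ * ⟪Q z, z⟫) + ρ ^ 2 * ‖Q z‖ ^ 2 := by
        rw [norm_sub_sq_real, real_inner_smul_right, norm_smul, Real.norm_eq_abs,
          abs_of_pos hρpos, real_inner_comm (Q z) z]
        ring
      have h1 := hQ z
      have h2 : ‖Q z‖ ^ 2 ≤ M ^ 2 * ‖z‖ ^ 2 := by
        nlinarith [norm_nonneg (Q z), norm_nonneg z]
      have hle : ‖z - ρ • Q z‖ ^ 2 ≤ (1 - c ^ 2 / M ^ 2) * ‖z‖ ^ 2 := by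
        rw [expand, hρ]
        have hM2 : (0:ℝ) < M ^ 2 := by positivity
        have e2 : c ^ 2 / (M ^ 2) ^ 2 * ‖Q z‖ ^ 2 ≤ c ^ 2 / (M ^ 2) ^ 2 * (M ^ 2 * ‖z‖ ^ 2) :=
          mul_le_mul_of_nonneg_left h2 (by positivity)
        have e2' : c ^ 2 / (M ^ 2) ^ 2 * (M ^ 2 * ‖z‖ ^ 2) = c ^ 2 / M ^ 2 * ‖z‖ ^ 2 := by
          field_simp
        have e1' : 2 * (c / M ^ 2 * (c * ‖z‖ ^ 2)) ≤ 2 * (c / M ^ 2 * ⟪Q z, z⟫) := by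
          have h := mul_le_mul_of_nonneg_left h1 (le_of_lt (by positivity : (0:ℝ) < c / M ^ 2))
          linarith
        have e3 : 2 * (c / M ^ 2 * (c * ‖z‖ ^ 2)) = 2 * (c ^ 2 / M ^ 2 * ‖z‖ ^ 2) := by ring
        have e4 : (c / M ^ 2) ^ 2 * ‖Q z‖ ^ 2 = c ^ 2 / (M ^ 2) ^ 2 * ‖Q z‖ ^ 2 := by ring
        have e5 : (1 - c ^ 2 / M ^ 2) * ‖z‖ ^ 2 = ‖z‖ ^ 2 - c ^ 2 / M ^ 2 * ‖z‖ ^ 2 := by ring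
        rw [e4, e5]
        linarith
      exact hle.trans (mul_le_mul_of_nonneg_right (le_max_right _ _) (sq_nonneg _))
    calc ‖T x - T y‖ ≤ ‖(x - ρ • (Q x - g)) - (y - ρ • (Q y - g))‖ := Plip _ _
      _ = ‖z - ρ • Q z‖ := by rw [e1]
      _ ≤ k * ‖z‖ := by
          have h := Real.sqrt_le_sqrt hsq
          rwa [Real.sqrt_mul hk2nonneg, Real.sqrt_sq (norm_nonneg _),
            Real.sqrt_sq (norm_nonneg _)] at h
  haveI : Nonempty F := ⟨0⟩
  have hlip : LipschitzWith ⟨k, hknonneg⟩ T :=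
    LipschitzWith.of_dist_le_mul fun x y => by
      rw [dist_eq_norm, dist_eq_norm]; exact Tlip x y
  have hcontr : ContractingWith ⟨k, hknonneg⟩ T := ⟨by exact_mod_cast hklt, hlip⟩
  set l : F := ContractingWith.fixedPoint T hcontr with hl
  have hfix : T l = l := hcontr.fixedPoint_isFixedPt
  refine ⟨l, by rw [← hfix]; exact hPK _, ?_⟩
  intro μ hμ
  have h := hP (l - ρ • (Q l - g)) μ hμ
  rw [show P (l - ρ • (Q l - g)) = l from hfix] at h
  have h' : -(ρ * ⟪Q l - g, μ - l⟫) ≤ 0 := by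
    calc -(ρ * ⟪Q l - g, μ - l⟫) = ⟪l - ρ • (Q l - g) - l, μ - l⟫ := by
          rw [show l - ρ • (Q l - g) - l = -(ρ • (Q l - g)) by abel, inner_neg_left,
            real_inner_smul_left]
      _ ≤ 0 := h
  nlinarith [hρpos]

set_option maxHeartbeats 2000000 in
theorem stmt0
    {X Y : Type*} [NormedAddCommGroup X] [InnerProductSpace ℝ X] [CompleteSpace X]
    [NormedAddCommGroup Y] [InnerProductSpace ℝ Y] [CompleteSpace Y]
    (a : X → X → ℝ) (b : X → Y → ℝ)
    (ha_lin₁ : ∀ u, IsLinearMap ℝ (a u))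
    (ha_lin₂ : ∀ v, IsLinearMap ℝ (fun u => a u v))
    (ha_symm : ∀ u v, a u v = a v u)
    (Ma : ℝ) (hMa : 0 < Ma) (ha_cont : ∀ u v, |a u v| ≤ Ma * ‖u‖ * ‖v‖)
    (ma : ℝ) (hma : 0 < ma) (ha_ell : ∀ u, ma * ‖u‖ ^ 2 ≤ a u u)
    (hb_lin₁ : ∀ v, IsLinearMap ℝ (b v))
    (hb_lin₂ : ∀ μ, IsLinearMap ℝ (fun v => b v μ))
    (Mb : ℝ) (hMb : 0 < Mb) (hb_cont : ∀ v μ, |b v μ| ≤ Mb * ‖v‖ * ‖μ‖)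
    (α : ℝ) (hα : 0 < α)
    (hinfsup : ∀ μ : Y, μ ≠ 0 →
      α ≤ ⨆ v : {v : X // v ≠ 0}, b v μ / (‖(v : X)‖ * ‖μ‖))
    (Λ : Set Y) (hΛclosed : IsClosed Λ) (hΛconv : Convex ℝ Λ) (hΛ0 : (0 : Y) ∈ Λ)
    (f : X) :
    ∃! p : X × Y, p.2 ∈ Λ ∧
      (∀ v : X, a p.1 v + b v p.2 = ⟪f, v⟫) ∧
      (∀ μ ∈ Λ, b p.1 (μ - p.2) ≤ 0) := by
  -- bundle `a` as a continuous bilinear map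
  have habs : ∀ u v, ‖(LinearMap.mk₂ ℝ a
      (fun m₁ m₂ n => (ha_lin₂ n).map_add m₁ m₂)
      (fun c m n => (ha_lin₂ n).map_smul c m)
      (fun m n₁ n₂ => (ha_lin₁ m).map_add n₁ n₂)
      (fun c m n => (ha_lin₁ m).map_smul c n) : X →ₗ[ℝ] X →ₗ[ℝ] ℝ) u v‖ ≤ Ma * ‖u‖ * ‖v‖ := by
    intro u v
    simpa [Real.norm_eq_abs] using ha_cont u v
  set Abil : X →L[ℝ] X →L[ℝ] ℝ := LinearMap.mkContinuous₂ _ Ma habs with hAbil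
  have hAapp : ∀ u v, Abil u v = a u v := fun u v => rfl
  have hcoA : IsCoercive Abil := by
    refine ⟨ma, hma, fun u => ?_⟩
    rw [hAapp]
    nlinarith [ha_ell u]
  set E := hcoA.continuousLinearEquivOfBilin with hE
  have hEapp : ∀ u v, ⟪E u, v⟫ = a u v := fun u v =>
    hcoA.continuousLinearEquivOfBilin_apply u v
  have hEnorm : ∀ w, ‖E w‖ ≤ Ma * ‖w‖ := by
    intro w
    rcases eq_or_lt_of_le (norm_nonneg (E w)) with h0 | h0
    · rw [← h0]; positivity
    · have h1 : ‖E w‖ * ‖E w‖ = a w (E w) := by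
        rw [← hEapp w (E w), real_inner_self_eq_norm_mul_norm]
      have h2 : a w (E w) ≤ Ma * ‖w‖ * ‖E w‖ := (le_abs_self _).trans (ha_cont _ _)
      have := h1.le.trans h2
      exact le_of_mul_le_mul_right (by linarith) h0
  -- bundle `b`
  have hbabs : ∀ μ v, ‖(LinearMap.mk₂ ℝ (fun (μ : Y) (v : X) => b v μ)
      (fun m₁ m₂ n => (hb_lin₁ n).map_add m₁ m₂)
      (fun c m n => (hb_lin₁ n).map_smul c m)
      (fun m n₁ n₂ => (hb_lin₂ m).map_add n₁ n₂)
      (fun c m n => (hb_lin₂ m).map_smul c n) : Y →ₗ[ℝ] X →ₗ[ℝ] ℝ) μ v‖ ≤ Mb * ‖μ‖ * ‖v‖ := by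
    intro μ v
    rw [Real.norm_eq_abs]
    calc |b v μ| ≤ Mb * ‖v‖ * ‖μ‖ := hb_cont v μ
      _ = Mb * ‖μ‖ * ‖v‖ := by ring
  set Bb : Y →L[ℝ] X →L[ℝ] ℝ := LinearMap.mkContinuous₂ _ Mb hbabs with hBb
  set Bop : Y →L[ℝ] X := LinearMap.mkContinuous
    { toFun := fun μ => (InnerProductSpace.toDual ℝ X).symm (Bb μ)
      map_add' := by
        intro μ ν
        apply ext_inner_right ℝ
        intro v
        simp [InnerProductSpace.toDual_symm_apply, inner_add_left]
      map_smul' := by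
        intro c μ
        apply ext_inner_right ℝ
        intro v
        simp [InnerProductSpace.toDual_symm_apply, inner_smul_left] }
    Mb (fun μ => by
      simp only [LinearMap.coe_mk, AddHom.coe_mk]
      rw [LinearIsometryEquiv.norm_map]
      refine ContinuousLinearMap.opNorm_le_bound _ (by positivity) fun v => ?_
      exact hbabs μ v) with hBopdef
  have hBop : ∀ μ v, ⟪Bop μ, v⟫ = b v μ := fun μ v =>
    InnerProductSpace.toDual_symm_apply
  -- lower bound from the inf-sup condition
  have hBlow : ∀ μ : Y, α * ‖μ‖ ≤ ‖Bop μ‖ := by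
    intro μ
    rcases eq_or_ne μ 0 with rfl | hμ
    · simp
    · have hμpos : 0 < ‖μ‖ := norm_pos_iff.mpr hμ
      have hub : (⨆ v : {v : X // v ≠ 0}, b (v : X) μ / (‖(v : X)‖ * ‖μ‖)) ≤ ‖Bop μ‖ / ‖μ‖ := by
        apply Real.iSup_le
        · rintro ⟨v, hv⟩
          have hvpos : 0 < ‖v‖ := norm_pos_iff.mpr hv
          have hbv : b v μ ≤ ‖Bop μ‖ * ‖v‖ := by
            calc b v μ = ⟪Bop μ, v⟫ := (hBop μ v).symm
              _ ≤ ‖Bop μ‖ * ‖v‖ := real_inner_le_norm _ _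
          rw [div_le_div_iff₀ (by positivity) hμpos]
          nlinarith [hbv, hμpos.le]
        · positivity
      have h := (hinfsup μ hμ).trans hub
      rwa [le_div_iff₀ hμpos] at h
  -- the operator and data for the variational inequality in Y
  set Q : Y →L[ℝ] Y := (ContinuousLinearMap.adjoint Bop).comp
    (((E.symm : X ≃L[ℝ] X) : X →L[ℝ] X).comp Bop) with hQdef
  set g : Y := ContinuousLinearMap.adjoint Bop (E.symm f) with hgdef
  have hQapp : ∀ μ ν : Y, ⟪Q μ, ν⟫ = ⟪E.symm (Bop μ), Bop ν⟫ := by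
    intro μ ν
    rw [hQdef]
    simp only [ContinuousLinearMap.coe_comp', Function.comp_apply,
      ContinuousLinearEquiv.coe_coe]
    rw [ContinuousLinearMap.adjoint_inner_left]
  have hgapp : ∀ ν : Y, ⟪g, ν⟫ = ⟪E.symm f, Bop ν⟫ := by
    intro ν
    rw [hgdef, ContinuousLinearMap.adjoint_inner_left]
  -- coercivity of Q
  have hcpos : 0 < ma * (α / Ma) ^ 2 := by positivity
  have hQcoer : ∀ μ : Y, ma * (α / Ma) ^ 2 * ‖μ‖ ^ 2 ≤ ⟪Q μ, μ⟫ := by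
    intro μ
    obtain ⟨w, hEw⟩ : ∃ w, E w = Bop μ := ⟨E.symm (Bop μ), E.apply_symm_apply _⟩
    have h1 : ⟪Q μ, μ⟫ = a w w := by
      calc ⟪Q μ, μ⟫ = ⟪E.symm (Bop μ), Bop μ⟫ := hQapp μ μ
        _ = ⟪w, E w⟫ := by rw [← hEw, E.symm_apply_apply]
        _ = ⟪E w, w⟫ := real_inner_comm _ _
        _ = a w w := hEapp w w
    have h2 : ma * ‖w‖ ^ 2 ≤ a w w := ha_ell w
    have h3 : α * ‖μ‖ ≤ Ma * ‖w‖ := by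
      calc α * ‖μ‖ ≤ ‖Bop μ‖ := hBlow μ
        _ = ‖E w‖ := by rw [hEw]
        _ ≤ Ma * ‖w‖ := hEnorm w
    have h4 : α / Ma * ‖μ‖ ≤ ‖w‖ := by
      rw [div_mul_eq_mul_div, div_le_iff₀ hMa]
      linarith [h3]
    have h5 : (α / Ma * ‖μ‖) * (α / Ma * ‖μ‖) ≤ ‖w‖ * ‖w‖ :=
      mul_self_le_mul_self (by positivity) h4
    rw [h1]
    nlinarith [h5, hma.le, h2]
  -- solve the variational inequality
  obtain ⟨l, hlΛ, hVI⟩ := my_stampacchia Q _ hcpos hQcoer g Λ hΛclosed hΛconv hΛ0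
  obtain ⟨u, hEu⟩ : ∃ u, E u = f - Bop l := ⟨E.symm (f - Bop l), E.apply_symm_apply _⟩
  have heq : ∀ v : X, a u v + b v l = ⟪f, v⟫ := by
    intro v
    rw [← hEapp, hEu, inner_sub_left, ← hBop l v]
    ring
  have hineq : ∀ μ ∈ Λ, b u (μ - l) ≤ 0 := by
    intro μ hμ
    have key : b u (μ - l) = -⟪Q l - g, μ - l⟫ := by
      have h1 : ⟪Q l - g, μ - l⟫ = ⟪E.symm (Bop l) - E.symm f, Bop (μ - l)⟫ := by
        rw [inner_sub_left, hQapp, hgapp, ← inner_sub_left]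
      have h2 : u = E.symm f - E.symm (Bop l) := by
        have h3 : E.symm (E u) = E.symm (f - Bop l) := congrArg E.symm hEu
        rwa [E.symm_apply_apply, map_sub] at h3
      calc b u (μ - l) = ⟪Bop (μ - l), u⟫ := (hBop _ _).symm
        _ = ⟪u, Bop (μ - l)⟫ := real_inner_comm _ _
        _ = -⟪E.symm (Bop l) - E.symm f, Bop (μ - l)⟫ := by
            rw [h2, ← inner_neg_left, neg_sub]
        _ = -⟪Q l - g, μ - l⟫ := by rw [h1]
    rw [key]
    linarith [hVI μ hμ]
  refine ⟨(u, l), ⟨hlΛ, heq, hineq⟩, ?_⟩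
  rintro ⟨u', l'⟩ ⟨hl', heq', hineq'⟩
  -- uniqueness
  have haw : ∀ v, a (u' - u) v = b v (l - l') := by
    intro v
    have e1 : a u' v + b v l' = a u v + b v l := by rw [heq' v, heq v]
    have e2 : a (u' - u) v = a u' v - a u v := (ha_lin₂ v).map_sub u' u
    have e3 : b v (l - l') = b v l - b v l' := (hb_lin₁ v).map_sub l l'
    linarith
  have hu' : u' = u := by
    set w : X := u' - u with hwdef
    have h1 : b u' (l - l') ≤ 0 := hineq' l hlΛ
    have h2 : b u (l' - l) ≤ 0 := hineq l' hl'
    have h3 : b u (l - l') = -b u (l' - l) := by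
      have := (hb_lin₁ u).map_sub l l'
      have := (hb_lin₁ u).map_sub l' l
      linarith
    have h4 : b w (l - l') = b u' (l - l') - b u (l - l') := (hb_lin₂ (l - l')).map_sub u' u
    have h5 : a w w ≤ 0 := by
      rw [haw w]
      linarith
    have h6 : ma * ‖w‖ ^ 2 ≤ 0 := (ha_ell w).trans h5
    have h8 : ‖w‖ ^ 2 ≤ 0 := by
      have h9 : ma * ‖w‖ ^ 2 ≤ ma * 0 := by simpa using h6
      exact (mul_le_mul_iff_right₀ hma).mp h9
    have h7 : ‖w‖ = 0 :=
      pow_eq_zero_iff two_ne_zero |>.mp (le_antisymm h8 (sq_nonneg _))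
    have : w = 0 := norm_eq_zero.mp h7
    exact sub_eq_zero.mp this
  have hl'' : l' = l := by
    by_contra hne
    have hd : l - l' ≠ 0 := sub_ne_zero.mpr (fun h => hne h.symm)
    have hzero : ∀ v : X, b v (l - l') = 0 := by
      intro v
      rw [← haw v, hu', sub_self]
      exact (ha_lin₂ v).mk' .. |>.map_zero
    have hsup := hinfsup (l - l') hd
    have : (⨆ v : {v : X // v ≠ 0}, b (v : X) (l - l') / (‖(v : X)‖ * ‖(l - l')‖)) ≤ 0 := by
      apply Real.iSup_le _ le_rfl
      rintro ⟨v, hv⟩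
      rw [hzero v]
      simp
    linarith
  rw [Prod.mk.injEq]
  exact ⟨hu', hl''⟩
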